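/- Let q = (n, m) ∈ ℤ² with n, m ≥ 1, and let p, p′ ∈ [0,1)². Suppose that for every s ∈ [0,1], the open segment from (1−s)·p + s·p′ to q contains no point of ℤ². Then the crossing words of the segment from p to q and of the segment from p′ to q are equal. -/

import Mathlib

open Classical

/-- The alphabet `{r, u}` of cube rolls: `r` = right roll, `u` = up roll. -/
inductive Letter
  | r : Letter
  | u : Letter
  deriving DecidableEq

/-- The parameter values `t` at which the segment `t ↦ (1−t)·p + t·(n, m)` crosses a
vertical grid line `x = k`, `1 ≤ k ≤ n−1`. -/
noncomputable def vertTimes (p : ℝ × ℝ) (n : ℕ) : Finset ℝ :=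
  (Finset.Icc 1 (n - 1)).image fun k : ℕ => ((k : ℝ) - p.1) / ((n : ℝ) - p.1)

/-- The parameter values `t` at which the segment `t ↦ (1−t)·p + t·(n, m)` crosses a
horizontal grid line `y = i`, `1 ≤ i ≤ m−1`. -/
noncomputable def horizTimes (p : ℝ × ℝ) (m : ℕ) : Finset ℝ :=
  (Finset.Icc 1 (m - 1)).image fun i : ℕ => ((i : ℝ) - p.2) / ((m : ℝ) - p.2)

/-- The crossing word (tumble sequence) of the segment from `p ∈ [0,1)²` to
`q = (n, m)`: the word over `{r, u}` obtained by recording, in increasing order of the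
parameter, a letter `r` at each crossing of a vertical line `x = k` (`1 ≤ k ≤ n−1`)
and a letter `u` at each crossing of a horizontal line `y = i` (`1 ≤ i ≤ m−1`). -/
noncomputable def crossWord (p : ℝ × ℝ) (n m : ℕ) : List Letter :=
  ((vertTimes p n ∪ horizTimes p m).sort (· ≤ ·)).map fun t =>
    if t ∈ vertTimes p n then Letter.r else Letter.u

lemma sort_image_strictMonoOn (s : Finset ℝ) (f : ℝ → ℝ)
    (hf : ∀ a ∈ s, ∀ b ∈ s, a < b → f a < f b) :
    (s.image f).sort (· ≤ ·) = (s.sort (· ≤ ·)).map f := by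
  have hinj : Set.InjOn f ↑s := by
    intro a ha b hb hab
    by_contra hne
    rcases lt_or_gt_of_ne hne with h | h
    · exact absurd hab (ne_of_lt (hf a ha b hb h))
    · exact absurd hab.symm (ne_of_lt (hf b hb a ha h))
  have hperm : ((s.image f).sort (· ≤ ·)).Perm ((s.sort (· ≤ ·)).map f) := by
    have h1 : ((s.image f).sort (· ≤ ·)).Perm (s.image f).toList :=
      Finset.sort_perm_toList _ _
    have h2 : (s.image f).toList.Perm ((s.toList).map f) := by
      rw [Finset.toList, Finset.toList, Finset.image_val_of_injOn hinj]
      rw [← Multiset.coe_eq_coe]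
      rw [← Multiset.map_coe, Multiset.coe_toList, Multiset.coe_toList]
    have h3 : ((s.toList).map f).Perm ((s.sort (· ≤ ·)).map f) :=
      ((Finset.sort_perm_toList _ _).map f).symm
    exact (h1.trans h2).trans h3
  have hs1 : ((s.image f).sort (· ≤ ·)).Pairwise (· ≤ ·) := Finset.pairwise_sort _ _
  have hs2 : ((s.sort (· ≤ ·)).map f).Pairwise (· ≤ ·) := by
    have hlt := (Finset.sortedLT_sort s).pairwise
    have : ((s.sort (· ≤ ·)).map f).Pairwise (· < ·) := by
      rw [List.pairwise_map]
      exact List.Pairwise.imp_of_mem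
        (fun ha hb h => hf _ ((Finset.mem_sort _).1 ha) _ ((Finset.mem_sort _).1 hb) h) hlt
    exact this.imp le_of_lt
  exact List.Perm.eq_of_pairwise' hs1 hs2 hperm

/-- Let `q = (n, m)` with `n, m ≥ 1`, and let `p, p′ ∈ [0,1)²`.  If for every
`s ∈ [0,1]` the open segment from `(1−s)·p + s·p′` to `q` contains no point of `ℤ²`,
then the crossing words of the segments from `p` to `q` and from `p′` to `q` are
equal. -/
theorem crossWord_constant (n m : ℕ) (hn : 1 ≤ n) (hm : 1 ≤ m) (p p' : ℝ × ℝ)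
    (hp1 : 0 ≤ p.1) (hp1' : p.1 < 1) (hp2 : 0 ≤ p.2) (hp2' : p.2 < 1)
    (hq1 : 0 ≤ p'.1) (hq1' : p'.1 < 1) (hq2 : 0 ≤ p'.2) (hq2' : p'.2 < 1)
    (havoid : ∀ s : ℝ, 0 ≤ s → s ≤ 1 → ∀ t : ℝ, 0 < t → t < 1 →
      ¬∃ z : ℤ × ℤ,
        (1 - t) * ((1 - s) * p.1 + s * p'.1) + t * (n : ℝ) = (z.1 : ℝ) ∧
        (1 - t) * ((1 - s) * p.2 + s * p'.2) + t * (m : ℝ) = (z.2 : ℝ)) :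
    crossWord p n m = crossWord p' n m := by
  have hn1 : (1 : ℝ) ≤ (n : ℝ) := by exact_mod_cast hn
  have hm1 : (1 : ℝ) ≤ (m : ℝ) := by exact_mod_cast hm
  have hdn : 0 < (n : ℝ) - p.1 := by linarith
  have hdm : 0 < (m : ℝ) - p.2 := by linarith
  have hdn' : 0 < (n : ℝ) - p'.1 := by linarith
  have hdm' : 0 < (m : ℝ) - p'.2 := by linarith
  -- the path avoids all "double crossing" coincidences
  have no_eq : ∀ s : ℝ, 0 ≤ s → s ≤ 1 → ∀ k i : ℕ, 1 ≤ k → k + 1 ≤ n → 1 ≤ i → i + 1 ≤ m →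
      ((k : ℝ) - ((1-s)*p.1 + s*p'.1)) * ((m : ℝ) - ((1-s)*p.2 + s*p'.2)) ≠
      ((i : ℝ) - ((1-s)*p.2 + s*p'.2)) * ((n : ℝ) - ((1-s)*p.1 + s*p'.1)) := by
    intro s hs0 hs1 k i hk1 hk2 hi1 hi2 heq
    set xs := (1-s)*p.1 + s*p'.1 with hxsdef
    set ys := (1-s)*p.2 + s*p'.2 with hysdef
    have hxs0 : 0 ≤ xs := by
      have := mul_nonneg (by linarith : (0:ℝ) ≤ 1 - s) hp1
      have := mul_nonneg hs0 hq1
      linarith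
    have hys0 : 0 ≤ ys := by
      have := mul_nonneg (by linarith : (0:ℝ) ≤ 1 - s) hp2
      have := mul_nonneg hs0 hq2
      linarith
    have hxs1 : xs < 1 := by
      nlinarith [mul_nonneg (mul_nonneg (by linarith : (0:ℝ) ≤ 1-s) (by linarith : (0:ℝ) ≤ 1-p.1)) hq1,
        mul_nonneg (mul_nonneg hs0 (by linarith : (0:ℝ) ≤ 1-p'.1)) hp1,
        mul_pos (by linarith : (0:ℝ) < 1-p.1) (by linarith : (0:ℝ) < 1-p'.1)]
    have hys1 : ys < 1 := by
      nlinarith [mul_nonneg (mul_nonneg (by linarith : (0:ℝ) ≤ 1-s) (by linarith : (0:ℝ) ≤ 1-p.2)) hq2,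
        mul_nonneg (mul_nonneg hs0 (by linarith : (0:ℝ) ≤ 1-p'.2)) hp2,
        mul_pos (by linarith : (0:ℝ) < 1-p.2) (by linarith : (0:ℝ) < 1-p'.2)]
    have hkr1 : (1 : ℝ) ≤ (k : ℝ) := by exact_mod_cast hk1
    have hkr2 : (k : ℝ) + 1 ≤ (n : ℝ) := by exact_mod_cast hk2
    have hir1 : (1 : ℝ) ≤ (i : ℝ) := by exact_mod_cast hi1
    have hir2 : (i : ℝ) + 1 ≤ (m : ℝ) := by exact_mod_cast hi2
    have hdns : 0 < (n : ℝ) - xs := by linarith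
    have hdms : 0 < (m : ℝ) - ys := by linarith
    set t := ((k : ℝ) - xs) / ((n : ℝ) - xs) with htdef
    have ht0 : 0 < t := div_pos (by linarith) hdns
    have ht1 : t < 1 := by
      rw [div_lt_one hdns]; linarith
    have htn : t * ((n : ℝ) - xs) = (k : ℝ) - xs := div_mul_cancel₀ _ (ne_of_gt hdns)
    have htm : t * ((m : ℝ) - ys) = (i : ℝ) - ys := by
      rw [htdef, div_mul_eq_mul_div, heq, mul_div_assoc,
        div_self (ne_of_gt hdns), mul_one]
    exact havoid s hs0 hs1 t ht0 ht1
      ⟨((k : ℤ), (i : ℤ)), by push_cast; constructor <;> [linear_combination htn; linear_combination htm]⟩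
  have ne0 : ∀ k i : ℕ, 1 ≤ k → k + 1 ≤ n → 1 ≤ i → i + 1 ≤ m →
      ((k : ℝ) - p.1) * ((m : ℝ) - p.2) ≠ ((i : ℝ) - p.2) * ((n : ℝ) - p.1) := by
    intro k i hk1 hk2 hi1 hi2
    have := no_eq 0 le_rfl zero_le_one k i hk1 hk2 hi1 hi2
    simpa using this
  have ne1 : ∀ k i : ℕ, 1 ≤ k → k + 1 ≤ n → 1 ≤ i → i + 1 ≤ m →
      ((k : ℝ) - p'.1) * ((m : ℝ) - p'.2) ≠ ((i : ℝ) - p'.2) * ((n : ℝ) - p'.1) := by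
    intro k i hk1 hk2 hi1 hi2
    have := no_eq 1 zero_le_one le_rfl k i hk1 hk2 hi1 hi2
    simpa using this
  -- sign preservation by IVT
  have sign : ∀ k i : ℕ, 1 ≤ k → k + 1 ≤ n → 1 ≤ i → i + 1 ≤ m →
      (((k : ℝ) - p.1) * ((m : ℝ) - p.2) < ((i : ℝ) - p.2) * ((n : ℝ) - p.1) ↔
       ((k : ℝ) - p'.1) * ((m : ℝ) - p'.2) < ((i : ℝ) - p'.2) * ((n : ℝ) - p'.1)) := by
    intro k i hk1 hk2 hi1 hi2
    set F : ℝ → ℝ := fun s =>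
      ((k : ℝ) - ((1-s)*p.1 + s*p'.1)) * ((m : ℝ) - ((1-s)*p.2 + s*p'.2)) -
      ((i : ℝ) - ((1-s)*p.2 + s*p'.2)) * ((n : ℝ) - ((1-s)*p.1 + s*p'.1)) with hFdef
    have hF : Continuous F := by fun_prop
    have hFne : ∀ s ∈ Set.Icc (0:ℝ) 1, F s ≠ 0 := by
      intro s hs h0
      exact no_eq s hs.1 hs.2 k i hk1 hk2 hi1 hi2 (by rw [hFdef] at h0; linarith [h0, sub_eq_zero.mp h0])
    have hF0 : F 0 = ((k : ℝ) - p.1) * ((m : ℝ) - p.2) - ((i : ℝ) - p.2) * ((n : ℝ) - p.1) := by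
      rw [hFdef]; ring_nf
    have hF1 : F 1 = ((k : ℝ) - p'.1) * ((m : ℝ) - p'.2) - ((i : ℝ) - p'.2) * ((n : ℝ) - p'.1) := by
      rw [hFdef]; ring_nf
    constructor
    · intro h
      by_contra hc
      have h1 : 0 ≤ F 1 := by rw [hF1]; linarith [not_lt.mp hc]
      have h0 : F 0 < 0 := by rw [hF0]; linarith
      obtain ⟨s, hs, hFs⟩ := intermediate_value_Icc zero_le_one hF.continuousOn ⟨h0.le, h1⟩
      exact hFne s hs hFs
    · intro h
      by_contra hc
      have h0 : 0 ≤ F 0 := by rw [hF0]; linarith [not_lt.mp hc]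
      have h1 : F 1 < 0 := by rw [hF1]; linarith
      obtain ⟨s, hs, hFs⟩ := intermediate_value_Icc' zero_le_one hF.continuousOn ⟨h1.le, h0⟩
      exact hFne s hs hFs
  -- membership descriptions
  have memV : ∀ t : ℝ, t ∈ vertTimes p n ↔
      ∃ k : ℕ, 1 ≤ k ∧ k + 1 ≤ n ∧ ((k : ℝ) - p.1) / ((n : ℝ) - p.1) = t := by
    intro t
    simp only [vertTimes, Finset.mem_image, Finset.mem_Icc]
    constructor
    · rintro ⟨k, ⟨h1, h2⟩, h3⟩; exact ⟨k, h1, by omega, h3⟩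
    · rintro ⟨k, h1, h2, h3⟩; exact ⟨k, ⟨h1, by omega⟩, h3⟩
  have memH : ∀ t : ℝ, t ∈ horizTimes p m ↔
      ∃ i : ℕ, 1 ≤ i ∧ i + 1 ≤ m ∧ ((i : ℝ) - p.2) / ((m : ℝ) - p.2) = t := by
    intro t
    simp only [horizTimes, Finset.mem_image, Finset.mem_Icc]
    constructor
    · rintro ⟨i, ⟨h1, h2⟩, h3⟩; exact ⟨i, h1, by omega, h3⟩
    · rintro ⟨i, h1, h2, h3⟩; exact ⟨i, ⟨h1, by omega⟩, h3⟩
  have memV' : ∀ t : ℝ, t ∈ vertTimes p' n ↔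
      ∃ k : ℕ, 1 ≤ k ∧ k + 1 ≤ n ∧ ((k : ℝ) - p'.1) / ((n : ℝ) - p'.1) = t := by
    intro t
    simp only [vertTimes, Finset.mem_image, Finset.mem_Icc]
    constructor
    · rintro ⟨k, ⟨h1, h2⟩, h3⟩; exact ⟨k, h1, by omega, h3⟩
    · rintro ⟨k, h1, h2, h3⟩; exact ⟨k, ⟨h1, by omega⟩, h3⟩
  have memH' : ∀ t : ℝ, t ∈ horizTimes p' m ↔
      ∃ i : ℕ, 1 ≤ i ∧ i + 1 ≤ m ∧ ((i : ℝ) - p'.2) / ((m : ℝ) - p'.2) = t := by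
    intro t
    simp only [horizTimes, Finset.mem_image, Finset.mem_Icc]
    constructor
    · rintro ⟨i, ⟨h1, h2⟩, h3⟩; exact ⟨i, h1, by omega, h3⟩
    · rintro ⟨i, h1, h2, h3⟩; exact ⟨i, ⟨h1, by omega⟩, h3⟩
  -- the transport map
  set f : ℝ → ℝ := fun t =>
    if t ∈ vertTimes p n then (t * ((n : ℝ) - p.1) + p.1 - p'.1) / ((n : ℝ) - p'.1)
    else (t * ((m : ℝ) - p.2) + p.2 - p'.2) / ((m : ℝ) - p'.2) with hfdef
  have hfv : ∀ k : ℕ, 1 ≤ k → k + 1 ≤ n →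
      f (((k : ℝ) - p.1) / ((n : ℝ) - p.1)) = ((k : ℝ) - p'.1) / ((n : ℝ) - p'.1) := by
    intro k hk1 hk2
    have hmem : ((k : ℝ) - p.1) / ((n : ℝ) - p.1) ∈ vertTimes p n :=
      (memV _).2 ⟨k, hk1, hk2, rfl⟩
    rw [hfdef]
    simp only [if_pos hmem]
    rw [div_mul_cancel₀ _ (ne_of_gt hdn)]
    congr 1; ring
  have hVH : ∀ t : ℝ, t ∈ horizTimes p m → t ∉ vertTimes p n := by
    intro t htH htV
    obtain ⟨i, hi1, hi2, hti⟩ := (memH _).1 htH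
    obtain ⟨k, hk1, hk2, htk⟩ := (memV _).1 htV
    have : ((k : ℝ) - p.1) / ((n : ℝ) - p.1) = ((i : ℝ) - p.2) / ((m : ℝ) - p.2) := by
      rw [htk, hti]
    rw [div_eq_div_iff (ne_of_gt hdn) (ne_of_gt hdm)] at this
    exact ne0 k i hk1 hk2 hi1 hi2 this
  have hVH' : ∀ t : ℝ, t ∈ horizTimes p' m → t ∉ vertTimes p' n := by
    intro t htH htV
    obtain ⟨i, hi1, hi2, hti⟩ := (memH' _).1 htH
    obtain ⟨k, hk1, hk2, htk⟩ := (memV' _).1 htV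
    have : ((k : ℝ) - p'.1) / ((n : ℝ) - p'.1) = ((i : ℝ) - p'.2) / ((m : ℝ) - p'.2) := by
      rw [htk, hti]
    rw [div_eq_div_iff (ne_of_gt hdn') (ne_of_gt hdm')] at this
    exact ne1 k i hk1 hk2 hi1 hi2 this
  have hfh : ∀ i : ℕ, 1 ≤ i → i + 1 ≤ m →
      f (((i : ℝ) - p.2) / ((m : ℝ) - p.2)) = ((i : ℝ) - p'.2) / ((m : ℝ) - p'.2) := by
    intro i hi1 hi2
    have hmem : ((i : ℝ) - p.2) / ((m : ℝ) - p.2) ∈ horizTimes p m :=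
      (memH _).2 ⟨i, hi1, hi2, rfl⟩
    have hnv := hVH _ hmem
    rw [hfdef]
    simp only [if_neg hnv]
    rw [div_mul_cancel₀ _ (ne_of_gt hdm)]
    congr 1; ring
  -- image facts
  have himgV : (vertTimes p n).image f = vertTimes p' n := by
    unfold vertTimes
    rw [Finset.image_image]
    refine Finset.image_congr ?_
    intro k hk
    rw [Finset.mem_coe, Finset.mem_Icc] at hk
    exact hfv k hk.1 (by omega)
  have himgH : (horizTimes p m).image f = horizTimes p' m := by
    unfold horizTimes
    rw [Finset.image_image]
    refine Finset.image_congr ?_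
    intro i hi
    rw [Finset.mem_coe, Finset.mem_Icc] at hi
    exact hfh i hi.1 (by omega)
  -- strict monotonicity on the union
  have mono : ∀ a ∈ vertTimes p n ∪ horizTimes p m, ∀ b ∈ vertTimes p n ∪ horizTimes p m,
      a < b → f a < f b := by
    intro a ha b hb hab
    rw [Finset.mem_union] at ha hb
    by_cases haV : a ∈ vertTimes p n
    · obtain ⟨k, hk1, hk2, hak⟩ := (memV _).1 haV
      by_cases hbV : b ∈ vertTimes p n
      · obtain ⟨j, hj1, hj2, hbj⟩ := (memV _).1 hbV
        rw [← hak, ← hbj, hfv k hk1 hk2, hfv j hj1 hj2]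
        rw [← hak, ← hbj, div_lt_div_iff₀ hdn hdn, mul_comm, mul_comm ((j:ℝ) - p.1),
          mul_lt_mul_iff_right₀ hdn] at hab
        rw [div_lt_div_iff₀ hdn' hdn', mul_comm, mul_comm ((j:ℝ) - p'.1), mul_lt_mul_iff_right₀ hdn']
        linarith
      · have hbH : b ∈ horizTimes p m := hb.resolve_left hbV
        obtain ⟨i, hi1, hi2, hbi⟩ := (memH _).1 hbH
        rw [← hak, ← hbi, hfv k hk1 hk2, hfh i hi1 hi2]
        rw [← hak, ← hbi, div_lt_div_iff₀ hdn hdm] at hab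
        rw [div_lt_div_iff₀ hdn' hdm']
        exact (sign k i hk1 hk2 hi1 hi2).1 hab
    · have haH : a ∈ horizTimes p m := ha.resolve_left haV
      obtain ⟨i, hi1, hi2, hai⟩ := (memH _).1 haH
      by_cases hbV : b ∈ vertTimes p n
      · obtain ⟨k, hk1, hk2, hbk⟩ := (memV _).1 hbV
        rw [← hai, ← hbk, hfh i hi1 hi2, hfv k hk1 hk2]
        rw [← hai, ← hbk, div_lt_div_iff₀ hdm hdn] at hab
        rw [div_lt_div_iff₀ hdm' hdn']
        have h1 : ¬ (((k : ℝ) - p'.1) * ((m : ℝ) - p'.2) < ((i : ℝ) - p'.2) * ((n : ℝ) - p'.1)) := by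
          intro h
          have := (sign k i hk1 hk2 hi1 hi2).2 h
          linarith
        exact lt_of_le_of_ne (not_lt.1 h1) (ne1 k i hk1 hk2 hi1 hi2).symm
      · have hbH : b ∈ horizTimes p m := hb.resolve_left hbV
        obtain ⟨j, hj1, hj2, hbj⟩ := (memH _).1 hbH
        rw [← hai, ← hbj, hfh i hi1 hi2, hfh j hj1 hj2]
        rw [← hai, ← hbj, div_lt_div_iff₀ hdm hdm, mul_comm, mul_comm ((j:ℝ) - p.2),
          mul_lt_mul_iff_right₀ hdm] at hab
        rw [div_lt_div_iff₀ hdm' hdm', mul_comm, mul_comm ((j:ℝ) - p'.2), mul_lt_mul_iff_right₀ hdm']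
        linarith
  -- letters agree
  have letters : ∀ t ∈ (vertTimes p n ∪ horizTimes p m).sort (· ≤ ·),
      (if f t ∈ vertTimes p' n then Letter.r else Letter.u) =
      (if t ∈ vertTimes p n then Letter.r else Letter.u) := by
    intro t ht
    have htU : t ∈ vertTimes p n ∪ horizTimes p m := (Finset.mem_sort _).1 ht
    rw [Finset.mem_union] at htU
    by_cases h : t ∈ vertTimes p n
    · have : f t ∈ vertTimes p' n := himgV ▸ Finset.mem_image_of_mem f h
      simp [h, this]
    · have htH : t ∈ horizTimes p m := htU.resolve_left h
      have : f t ∈ horizTimes p' m := himgH ▸ Finset.mem_image_of_mem f htH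
      have hft : f t ∉ vertTimes p' n := hVH' _ this
      simp [h, hft]
  -- conclude
  unfold crossWord
  have hU : vertTimes p' n ∪ horizTimes p' m = (vertTimes p n ∪ horizTimes p m).image f := by
    rw [Finset.image_union, himgV, himgH]
  rw [hU, sort_image_strictMonoOn _ f mono, List.map_map]
  exact (List.map_congr_left letters).symm
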